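/- Every element of order two in PGL(2, K), for K a field of characteristic ≠ 2, is conjugate to an element of the form σ_f = [[0, f],[1, 0]] for some f ∈ K*. -/

import Mathlib

open Matrix

/-- `PGL(2, K)`, the quotient of `GL(2, K)` by its centre (the scalar matrices). -/
abbrev PGL2 (K : Type*) [Field K] : Type _ :=
  GL (Fin 2) K ⧸ Subgroup.center (GL (Fin 2) K)

/-- The class in `PGL(2, K)` of a matrix with non-zero determinant. -/
noncomputable def pgl2 {K : Type*} [Field K] (M : Matrix (Fin 2) (Fin 2) K)
    (h : M.det ≠ 0) : PGL2 K :=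
  QuotientGroup.mk (Matrix.GeneralLinearGroup.mkOfDetNeZero M h)

/-- The class of `[[0, f], [1, 0]]` in `PGL(2, K)`. -/
noncomputable def sigmaPGL {K : Type*} [Field K] (f : Kˣ) : PGL2 K :=
  pgl2 !![0, (f : K); 1, 0] (by simp [Matrix.det_fin_two_of])

section Aux

variable {K : Type*} [Field K]

lemma coe_mkOfDetNeZero (A : Matrix (Fin 2) (Fin 2) K) (h : A.det ≠ 0) :
    ((Matrix.GeneralLinearGroup.mkOfDetNeZero A h : GL (Fin 2) K) : Matrix (Fin 2) (Fin 2) K)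
      = A := rfl

/-- Membership in the centre of `GL(2,K)` is equivalent to being a scalar matrix. -/
lemma mem_center_GL2_iff {M : GL (Fin 2) K} :
    M ∈ Subgroup.center (GL (Fin 2) K) ↔
      ∃ a : K, (M : Matrix (Fin 2) (Fin 2) K) = a • 1 := by
  constructor
  · intro h
    rw [Subgroup.mem_center_iff] at h
    set A : Matrix (Fin 2) (Fin 2) K := (M : Matrix (Fin 2) (Fin 2) K) with hA
    have hT1 : (!![1, 1; 0, 1] : Matrix (Fin 2) (Fin 2) K).det ≠ 0 := by
      simp [Matrix.det_fin_two_of]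
    have hT2 : (!![1, 0; 1, 1] : Matrix (Fin 2) (Fin 2) K).det ≠ 0 := by
      simp [Matrix.det_fin_two_of]
    have h1 := congrArg (Units.val) (h (Matrix.GeneralLinearGroup.mkOfDetNeZero _ hT1))
    have h2 := congrArg (Units.val) (h (Matrix.GeneralLinearGroup.mkOfDetNeZero _ hT2))
    simp only [Units.val_mul, coe_mkOfDetNeZero] at h1 h2
    -- h1 : !![1,1;0,1] * A = A * !![1,1;0,1]
    have e10 : A 1 0 = 0 := by
      have := congrFun (congrFun h1 0) 0
      simp [Matrix.mul_apply, Fin.sum_univ_two, ← hA] at this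
      linear_combination this
    have e01 : A 0 1 = 0 := by
      have := congrFun (congrFun h2 1) 1
      simp [Matrix.mul_apply, Fin.sum_univ_two, ← hA] at this
      linear_combination this
    have e00 : A 0 0 = A 1 1 := by
      have := congrFun (congrFun h1 0) 1
      simp [Matrix.mul_apply, Fin.sum_univ_two, ← hA] at this
      linear_combination -this
    refine ⟨A 0 0, ?_⟩
    ext i j
    fin_cases i <;> fin_cases j <;>
      simp [Matrix.smul_apply, Matrix.one_apply, e10, e01, e00]
  · rintro ⟨a, ha⟩
    rw [Subgroup.mem_center_iff]
    intro B
    apply Units.ext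
    simp only [Units.val_mul, ha]
    rw [Matrix.smul_mul, Matrix.mul_smul, Matrix.one_mul, Matrix.mul_one]

lemma exists_good_vec (h2 : (2 : K) ≠ 0) (A : Matrix (Fin 2) (Fin 2) K)
    (c : K) (hc : c ≠ 0) (hA2 : A * A = c • 1) (hns : ∀ a : K, A ≠ a • 1) :
    ∃ v : Fin 2 → K, v 0 * (A *ᵥ v) 1 - v 1 * (A *ᵥ v) 0 ≠ 0 := by
  by_cases h10 : A 1 0 = 0
  · by_cases h01 : A 0 1 = 0
    · -- A is diagonal
      have hsq : A 0 0 * A 0 0 = c := by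
        have := congrFun (congrFun hA2 0) 0
        simpa [Matrix.mul_apply, Fin.sum_univ_two, h10, h01, Matrix.smul_apply,
          Matrix.one_apply] using this
      have hsq' : A 1 1 * A 1 1 = c := by
        have := congrFun (congrFun hA2 1) 1
        simpa [Matrix.mul_apply, Fin.sum_univ_two, h10, h01, Matrix.smul_apply,
          Matrix.one_apply] using this
      have hne : A 0 0 ≠ A 1 1 := by
        intro h
        apply hns (A 0 0)
        ext i j
        fin_cases i <;> fin_cases j <;>
          simp [Matrix.smul_apply, Matrix.one_apply, h10, h01, h]
      have hsum : A 1 1 = -A 0 0 := by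
        have hfac : (A 0 0 - A 1 1) * (A 0 0 + A 1 1) = 0 := by
          linear_combination hsq - hsq'
        rcases mul_eq_zero.mp hfac with h | h
        · exact absurd (sub_eq_zero.mp h) hne
        · linear_combination h
      have h00 : A 0 0 ≠ 0 := fun h => hc (by rw [← hsq, h, mul_zero])
      refine ⟨![1, 1], ?_⟩
      simp only [Matrix.mulVec, dotProduct, Fin.sum_univ_two]
      simp [h10, h01, hsum]
      intro h
      apply h00
      have : (2 : K) * A 0 0 = 0 := by linear_combination -h
      exact (mul_eq_zero.mp this).resolve_left h2
    · refine ⟨![0, 1], ?_⟩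
      simp only [Matrix.mulVec, dotProduct, Fin.sum_univ_two]
      simpa using h01
  · refine ⟨![1, 0], ?_⟩
    simp only [Matrix.mulVec, dotProduct, Fin.sum_univ_two]
    simpa using h10

end Aux

/-- over a field of characteristic ≠ 2, every element of order two in
`PGL(2, K)` is conjugate to `σ_f = [[0, f], [1, 0]]` for some `f ∈ K*`. -/
theorem order_two_conj_sigma {K : Type*} [Field K] (h2 : (2 : K) ≠ 0)
    (σ : PGL2 K) (hσ : orderOf σ = 2) :
    ∃ f : Kˣ, IsConj (sigmaPGL f) σ := by
  obtain ⟨M, rfl⟩ := QuotientGroup.mk_surjective σ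
  set A : Matrix (Fin 2) (Fin 2) K := (M : Matrix (Fin 2) (Fin 2) K) with hAdef
  -- M² is central
  have hpow : (QuotientGroup.mk M : PGL2 K) ^ 2 = 1 := by
    have := pow_orderOf_eq_one (QuotientGroup.mk M : PGL2 K)
    rwa [hσ] at this
  have hM2 : M ^ 2 ∈ Subgroup.center (GL (Fin 2) K) := by
    rw [← QuotientGroup.eq_one_iff]
    simpa using hpow
  obtain ⟨c, hc⟩ := mem_center_GL2_iff.mp hM2
  have hcA : A * A = c • 1 := by
    have : ((M ^ 2 : GL (Fin 2) K) : Matrix (Fin 2) (Fin 2) K) = A * A := by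
      rw [pow_two]; rfl
    rw [← this, hc]
  have hc0 : c ≠ 0 := by
    intro h
    have hu : IsUnit ((M ^ 2 : GL (Fin 2) K) : Matrix (Fin 2) (Fin 2) K) :=
      (M ^ 2 : GL (Fin 2) K).isUnit
    have hdet : IsUnit ((M ^ 2 : GL (Fin 2) K) : Matrix (Fin 2) (Fin 2) K).det :=
      (Matrix.isUnit_iff_isUnit_det _).mp hu
    rw [hc, h] at hdet
    simp at hdet
  -- M is not central
  have hne1 : (QuotientGroup.mk M : PGL2 K) ≠ 1 := by
    intro h
    rw [h] at hσ
    simp at hσ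
  have hns : ∀ a : K, A ≠ a • 1 := by
    intro a ha
    exact hne1 ((QuotientGroup.eq_one_iff _).mpr (mem_center_GL2_iff.mpr ⟨a, ha⟩))
  obtain ⟨v, hv⟩ := exists_good_vec h2 A c hc0 hcA hns
  set w : Fin 2 → K := A *ᵥ v with hw
  set P : Matrix (Fin 2) (Fin 2) K := !![v 0, w 0; v 1, w 1] with hPdef
  have hPdet : P.det ≠ 0 := by
    rw [hPdef]
    simp only [Matrix.det_fin_two_of]
    intro h; apply hv; linear_combination h
  set S : Matrix (Fin 2) (Fin 2) K := !![0, c; 1, 0] with hSdef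
  have hSdet : S.det ≠ 0 := by simp [hSdef, Matrix.det_fin_two_of, hc0]
  have key : A * P = P * S := by
    have hwv : A *ᵥ w = c • v := by
      rw [hw, Matrix.mulVec_mulVec, hcA]
      simp [Matrix.smul_mulVec]
    ext i j
    have hAv : ∀ i, A i 0 * v 0 + A i 1 * v 1 = w i := by
      intro i; rw [hw]; simp [Matrix.mulVec, dotProduct, Fin.sum_univ_two]
    have hAw : ∀ i, A i 0 * w 0 + A i 1 * w 1 = c * v i := by
      intro i
      have := congrFun hwv i
      simpa [Matrix.mulVec, dotProduct, Fin.sum_univ_two] using this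
    fin_cases i <;> fin_cases j <;>
      simp [Matrix.mul_apply, Fin.sum_univ_two, hPdef, hSdef] <;>
      [exact hAv 0; linear_combination hAw 0; exact hAv 1; linear_combination hAw 1]
  -- lift to GL
  set Pg := Matrix.GeneralLinearGroup.mkOfDetNeZero P hPdet with hPg
  set Sg := Matrix.GeneralLinearGroup.mkOfDetNeZero S hSdet with hSg
  have keyGL : M * Pg = Pg * Sg := by
    apply Units.ext
    exact key
  refine ⟨Units.mk0 c hc0, ?_⟩
  have hconj : Pg * Sg * Pg⁻¹ = M := by
    rw [← keyGL]
    group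
  rw [isConj_iff]
  refine ⟨QuotientGroup.mk Pg, ?_⟩
  have hss : sigmaPGL (Units.mk0 c hc0) = QuotientGroup.mk Sg := rfl
  rw [hss, ← QuotientGroup.mk_inv, ← QuotientGroup.mk_mul, ← QuotientGroup.mk_mul, hconj]
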